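/- arXiv:2212.12265 — 2 statements merged into one kernel-verified Lean document; each statement's English description precedes it below -/
import Mathlib

section
/- Every equivalence φ : C1 → C2 between convolutional codes is a strong isometry, i.e., wt(c) = wt(φ(c)) and deg(c) = deg(φ(c)) for all c ∈ C1. -/
open Polynomial

namespace ConvCode

variable {F : Type*} [Field F] [Fintype F] {n k : ℕ}

/-- Weight of a polynomial vector: total number of nonzero coefficients. -/
noncomputable def wtv (c : Fin n → Polynomial F) : ℕ := ∑ ℓ, (c ℓ).support.card

/-- Truncation of a polynomial, keeping the coefficients of degrees `h` through `j`. -/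
noncomputable def truncp (h j : ℕ) (p : Polynomial F) : Polynomial F :=
  ∑ i ∈ Finset.Icc h j, Polynomial.C (p.coeff i) * Polynomial.X ^ i

/-- Truncation `c_{[h,j]}` of a polynomial vector. -/
noncomputable def truncv (h j : ℕ) (c : Fin n → Polynomial F) : Fin n → Polynomial F :=
  fun ℓ => truncp h j (c ℓ)

/-- Degree of a polynomial vector: the largest `i` such that `c[i] ≠ 0`. -/
def degv (c : Fin n → Polynomial F) : ℕ := Finset.univ.sup fun ℓ => (c ℓ).natDegree

/-- `φ` is a `j`-equivalence: it preserves weights of `j`-th truncations. -/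
def IsJEquiv (C1 C2 : Submodule (Polynomial F) (Fin n → Polynomial F))
    (φ : C1 ≃ₗ[Polynomial F] C2) (j : ℕ) : Prop :=
  ∀ c : C1, wtv (truncv 0 j (c : Fin n → Polynomial F)) =
    wtv (truncv 0 j ((φ c : C2) : Fin n → Polynomial F))

/-- `φ` is an equivalence: it is a `j`-equivalence for every `j`. -/
def IsEquiv (C1 C2 : Submodule (Polynomial F) (Fin n → Polynomial F))
    (φ : C1 ≃ₗ[Polynomial F] C2) : Prop := ∀ j : ℕ, IsJEquiv C1 C2 φ j

/-- `φ` is an isometry: it preserves weights. -/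
def IsIsometry (C1 C2 : Submodule (Polynomial F) (Fin n → Polynomial F))
    (φ : C1 ≃ₗ[Polynomial F] C2) : Prop :=
  ∀ c : C1, wtv (c : Fin n → Polynomial F) = wtv ((φ c : C2) : Fin n → Polynomial F)

/-- `G` is a generator matrix of `C`: its rows form an `F[x]`-basis of `C`. -/
def IsGenMat (C : Submodule (Polynomial F) (Fin n → Polynomial F))
    (G : Matrix (Fin k) (Fin n) (Polynomial F)) : Prop :=
  LinearIndependent (Polynomial F) (fun i => G i) ∧
    Submodule.span (Polynomial F) (Set.range fun i => G i) = C

/-- `G` is row reduced: its leading row coefficient matrix has full rank. -/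
def RowReduced (G : Matrix (Fin k) (Fin n) (Polynomial F)) : Prop :=
  LinearIndependent F (fun i => fun ℓ => (G i ℓ).coeff (degv (G i)))

/-- `C` is noncatastrophic: it has a generator matrix with a polynomial right inverse
whose constant term has rank `k`. -/
def Noncatastrophic (C : Submodule (Polynomial F) (Fin n → Polynomial F)) (k : ℕ) : Prop :=
  ∃ G : Matrix (Fin k) (Fin n) (Polynomial F), IsGenMat C G ∧
    (∃ H : Matrix (Fin n) (Fin k) (Polynomial F), G * H = 1) ∧
    LinearIndependent F (fun i => fun ℓ => (G i ℓ).eval 0)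

/-- Joint support of a family of polynomial vectors: the pairs `(ℓ, i)` such that the
coefficient of `x^i` in the `ℓ`-th coordinate of some member is nonzero. -/
def gsupp {r : ℕ} (d : Fin r → Fin n → Polynomial F) : Set (Fin n × ℕ) :=
  { q | ∃ s, ((d s) q.1).coeff q.2 ≠ 0 }

/-- The `(r,j)`-generalized column distance of the code generated by `G`. -/
noncomputable def gcdJ (G : Matrix (Fin k) (Fin n) (Polynomial F)) (r j : ℕ) : ℕ :=
  sInf { m | ∃ p : Fin r → Fin k → Polynomial F,
    LinearIndependent F (fun s => fun l => (p s l).eval 0) ∧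
    m = (gsupp fun s => truncv 0 j (Matrix.vecMul (p s) G)).ncard }

/-- The `r`-generalized column distance: the limit as `j → ∞` of the `(r,j)`-generalized
column distances. -/
noncomputable def gcdLim (G : Matrix (Fin k) (Fin n) (Polynomial F)) (r : ℕ) : ℕ :=
  Filter.limsup (fun j => gcdJ G r j) Filter.atTop

/-- Evaluation at `0`, as an `F`-linear map `F[x]^n → F^n`. -/
noncomputable def ev0 : (Fin n → Polynomial F) →ₗ[F] (Fin n → F) :=
  LinearMap.pi fun ℓ => (Polynomial.aeval (0 : F)).toLinearMap.comp (LinearMap.proj ℓ)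

/-- `C[0] = {c(0) : c ∈ C} ⊆ F^n`. -/
noncomputable def evalZero (C : Submodule (Polynomial F) (Fin n → Polynomial F)) :
    Submodule F (Fin n → F) := (C.restrictScalars F).map ev0

/-- The `r`-th generalized Hamming weight of a block code `L ⊆ F^n`. -/
noncomputable def hammingGW (L : Submodule F (Fin n → F)) (r : ℕ) : ℕ :=
  sInf { m | ∃ V : Submodule F (Fin n → F), V ≤ L ∧ Module.finrank F V = r ∧
    m = { ℓ : Fin n | ∃ v ∈ V, v ℓ ≠ 0 }.ncard }

/-- The `r`-th generalized weight of a convolutional code. -/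
noncomputable def genWt (C : Submodule (Polynomial F) (Fin n → Polynomial F)) (r : ℕ) : ℕ :=
  sInf { m | ∃ d : Fin r → Fin n → Polynomial F, (∀ s, d s ∈ C) ∧
    (r : Cardinal) ≤ Module.rank (Polynomial F)
      ↥(Submodule.span (Polynomial F) (Set.range d)) ∧
    m = (gsupp d).ncard }

/-- The free distance of a convolutional code. -/
noncomputable def dfree (C : Submodule (Polynomial F) (Fin n → Polynomial F)) : ℕ :=
  sInf { m | ∃ c : Fin n → Polynomial F, c ∈ C ∧ c ≠ 0 ∧ m = wtv c }

end ConvCode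

open ConvCode

section Aux
variable {F : Type*} [Field F] [Fintype F] {n : ℕ}

lemma truncp_coeff (j m : ℕ) (p : Polynomial F) :
    (ConvCode.truncp 0 j p).coeff m = if m ≤ j then p.coeff m else 0 := by
  unfold ConvCode.truncp
  rw [Polynomial.finset_sum_coeff]
  simp only [Polynomial.coeff_C_mul, Polynomial.coeff_X_pow, mul_ite, mul_one, mul_zero]
  rw [Finset.sum_ite_eq (Finset.Icc 0 j) m (fun i => p.coeff i)]
  simp

lemma truncp_support (j : ℕ) (p : Polynomial F) :
    (ConvCode.truncp 0 j p).support = p.support.filter (· ≤ j) := by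
  ext m
  simp only [Polynomial.mem_support_iff, Finset.mem_filter, truncp_coeff]
  split <;> simp_all

lemma wtv_truncv_le (j : ℕ) (c : Fin n → Polynomial F) :
    ConvCode.wtv (ConvCode.truncv 0 j c) ≤ ConvCode.wtv c := by
  unfold ConvCode.wtv ConvCode.truncv
  refine Finset.sum_le_sum fun ℓ _ => ?_
  rw [truncp_support]
  exact Finset.card_le_card (Finset.filter_subset _ _)

lemma wtv_truncv_eq (j : ℕ) (c : Fin n → Polynomial F) (h : ConvCode.degv c ≤ j) :
    ConvCode.wtv (ConvCode.truncv 0 j c) = ConvCode.wtv c := by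
  unfold ConvCode.wtv ConvCode.truncv
  refine Finset.sum_congr rfl fun ℓ _ => ?_
  rw [truncp_support]
  congr 1
  rw [Finset.filter_eq_self]
  intro m hm
  have h1 : m ≤ (c ℓ).natDegree := Polynomial.le_natDegree_of_mem_supp m hm
  have h2 : (c ℓ).natDegree ≤ ConvCode.degv c :=
    Finset.le_sup (f := fun ℓ => (c ℓ).natDegree) (Finset.mem_univ ℓ)
  omega

lemma wtv_truncv_lt (j : ℕ) (c : Fin n → Polynomial F) (h : j < ConvCode.degv c) :
    ConvCode.wtv (ConvCode.truncv 0 j c) < ConvCode.wtv c := by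
  obtain ⟨ℓ, hℓ⟩ : ∃ ℓ, j < (c ℓ).natDegree := by
    by_contra hcon
    push_neg at hcon
    exact absurd (Finset.sup_le fun ℓ _ => hcon ℓ) (not_le.mpr h)
  unfold ConvCode.wtv ConvCode.truncv
  have hne : c ℓ ≠ 0 := by
    intro h0; rw [h0] at hℓ; simp at hℓ
  refine Finset.sum_lt_sum (fun i _ => by
      rw [truncp_support]; exact Finset.card_le_card (Finset.filter_subset _ _))
    ⟨ℓ, Finset.mem_univ ℓ, ?_⟩
  rw [truncp_support]
  refine Finset.card_lt_card ⟨Finset.filter_subset _ _, fun hsub => ?_⟩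
  have := hsub (Polynomial.natDegree_mem_support_of_nonzero hne)
  rw [Finset.mem_filter] at this
  omega

end Aux
/-- every equivalence of convolutional codes is a strong isometry. -/
theorem equiv_is_strong_isometry {F : Type*} [Field F] [Fintype F] {n : ℕ}
    (C1 C2 : Submodule (Polynomial F) (Fin n → Polynomial F))
    (φ : C1 ≃ₗ[Polynomial F] C2) (hφ : IsEquiv C1 C2 φ) :
    (∀ c : C1, wtv (c : Fin n → Polynomial F) =
        wtv ((φ c : C2) : Fin n → Polynomial F)) ∧
    (∀ c : C1, degv (c : Fin n → Polynomial F) =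
        degv ((φ c : C2) : Fin n → Polynomial F)) := by
  have hwt : ∀ c : C1, ConvCode.wtv (c : Fin n → Polynomial F) =
      ConvCode.wtv ((φ c : C2) : Fin n → Polynomial F) := by
    intro c
    set j := max (ConvCode.degv (c : Fin n → Polynomial F))
      (ConvCode.degv ((φ c : C2) : Fin n → Polynomial F)) with hj
    have h1 := wtv_truncv_eq j (c : Fin n → Polynomial F) (le_max_left _ _)
    have h2 := wtv_truncv_eq j ((φ c : C2) : Fin n → Polynomial F) (le_max_right _ _)
    rw [← h1, ← h2]
    exact hφ j c
  refine ⟨hwt, fun c => ?_⟩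
  by_contra hne
  rcases lt_or_gt_of_ne hne with h | h
  · set j := ConvCode.degv (c : Fin n → Polynomial F)
    have h1 := wtv_truncv_eq j (c : Fin n → Polynomial F) le_rfl
    have h2 := wtv_truncv_lt j ((φ c : C2) : Fin n → Polynomial F) h
    have := hφ j c
    rw [h1, hwt c] at this
    omega
  · set j := ConvCode.degv ((φ c : C2) : Fin n → Polynomial F) with hjdef
    have h1 := wtv_truncv_eq j ((φ c : C2) : Fin n → Polynomial F) le_rfl
    have h2 := wtv_truncv_lt j (c : Fin n → Polynomial F) h
    have := hφ j c
    rw [h1, ← hwt c] at this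
    omega
end

section
/- Let φ : C1 → C2 be an isometry of convolutional codes and let δ1 be the memory of C1. If φ is a δ1-equivalence, then φ is an equivalence. -/
open Polynomial

open ConvCode

section Helpers
open Polynomial Finset ConvCode

variable {F : Type*} [Field F] {n : ℕ}

private lemma CCaux.coeff_truncp (p : Polynomial F) (j i : ℕ) :
    (truncp 0 j p).coeff i = if i ≤ j then p.coeff i else 0 := by
  unfold truncp
  rw [Polynomial.finset_sum_coeff]
  simp only [Polynomial.coeff_C_mul, Polynomial.coeff_X_pow, mul_ite, mul_one, mul_zero]
  rw [Finset.sum_ite_eq (Finset.Icc 0 j) i (fun t => p.coeff t)]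
  simp [Nat.zero_le]

private lemma CCaux.support_truncp (p : Polynomial F) (j : ℕ) :
    (truncp 0 j p).support = p.support.filter (fun i => i ≤ j) := by
  ext i
  simp only [Polynomial.mem_support_iff, CCaux.coeff_truncp, Finset.mem_filter]
  by_cases h : i ≤ j <;> simp [h]

private lemma CCaux.wtv_truncv (c : Fin n → Polynomial F) (j : ℕ) :
    wtv (truncv 0 j c) = ∑ ℓ, ((c ℓ).support.filter (fun i => i ≤ j)).card := by
  unfold wtv truncv
  simp [CCaux.support_truncp]

private lemma CCaux.wtv_split (c : Fin n → Polynomial F) (j : ℕ) :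
    wtv c = wtv (truncv 0 j c) + ∑ ℓ, ((c ℓ).support.filter (fun i => j < i)).card := by
  rw [CCaux.wtv_truncv]
  unfold wtv
  rw [← Finset.sum_add_distrib]
  refine Finset.sum_congr rfl fun ℓ _ => ?_
  have := Finset.card_filter_add_card_filter_not (s := (c ℓ).support)
    (p := fun i => i ≤ j)
  simp only [not_le] at this
  omega

private lemma CCaux.filter_le_support_X_pow_mul (p : Polynomial F) (m j : ℕ) :
    ((X ^ m * p).support.filter (fun i => i ≤ j + m)) =
      (p.support.filter (fun i => i ≤ j)).map ⟨(· + m), add_left_injective m⟩ := by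
  ext i
  simp only [Finset.mem_filter, Finset.mem_map, Polynomial.mem_support_iff,
    Function.Embedding.coeFn_mk, mul_comm (X ^ m : Polynomial F) p, Polynomial.coeff_mul_X_pow']
  constructor
  · rintro ⟨hne, hle⟩
    by_cases hm : m ≤ i
    · exact ⟨i - m, ⟨by simpa [hm] using hne, by omega⟩, by omega⟩
    · simp [hm] at hne
  · rintro ⟨u, ⟨hu, huj⟩, rfl⟩
    constructor
    · simpa using hu
    · omega

private lemma CCaux.tail_filter_eq (a b : Polynomial F) (m δ j : ℕ) (hm : m + δ = j + 1)
    (ha : ∀ i, j < i → a.coeff i = 0) :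
    ((a + X ^ m * b).support.filter (fun i => j + 1 < i)) =
      (b.support.filter (fun i => δ < i)).map ⟨(· + m), add_left_injective m⟩ := by
  ext i
  simp only [Finset.mem_filter, Finset.mem_map, Polynomial.mem_support_iff,
    Function.Embedding.coeFn_mk, Polynomial.coeff_add,
    mul_comm (X ^ m : Polynomial F) b, Polynomial.coeff_mul_X_pow']
  constructor
  · rintro ⟨hne, hlt⟩
    rw [ha i (by omega)] at hne
    have hm' : m ≤ i := by omega
    simp only [hm', if_true, zero_add] at hne
    exact ⟨i - m, ⟨hne, by omega⟩, by omega⟩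
  · rintro ⟨u, ⟨hu, huδ⟩, rfl⟩
    have h1 : j < u + m := by omega
    refine ⟨?_, by omega⟩
    rw [ha _ h1]
    simpa [show m ≤ u + m by omega] using hu

private lemma CCaux.coeff_eq_zero_of_wtv_trunc (c : Fin n → Polynomial F) (j : ℕ)
    (h : wtv (truncv 0 j c) = wtv c) : ∀ ℓ i, j < i → (c ℓ).coeff i = 0 := by
  rw [CCaux.wtv_truncv] at h
  unfold wtv at h
  have hle : ∀ ℓ ∈ (Finset.univ : Finset (Fin n)),
      ((c ℓ).support.filter (fun i => i ≤ j)).card ≤ (c ℓ).support.card :=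
    fun ℓ _ => Finset.card_filter_le _ _
  have hall := (Finset.sum_eq_sum_iff_of_le hle).mp h
  intro ℓ i hi
  by_contra hne
  have hmem : i ∈ (c ℓ).support := Polynomial.mem_support_iff.mpr hne
  have heq : (c ℓ).support.filter (fun i => i ≤ j) = (c ℓ).support :=
    Finset.eq_of_subset_of_card_le (Finset.filter_subset _ _) (hall ℓ (Finset.mem_univ ℓ)).ge
  have : i ∈ (c ℓ).support.filter (fun i => i ≤ j) := by rw [heq]; exact hmem
  simp only [Finset.mem_filter] at this
  omega

private lemma CCaux.wtv_shift (c : Fin n → Polynomial F) (m j : ℕ) :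
    wtv (truncv 0 (j + m) ((X : Polynomial F) ^ m • c)) = wtv (truncv 0 j c) := by
  rw [CCaux.wtv_truncv, CCaux.wtv_truncv]
  refine Finset.sum_congr rfl fun ℓ _ => ?_
  have : ((X : Polynomial F) ^ m • c) ℓ = X ^ m * c ℓ := rfl
  rw [this, CCaux.filter_le_support_X_pow_mul, Finset.card_map]

end Helpers

/-- an isometry which is a `δ1`-equivalence, where `δ1` is the memory of `C1`
(the maximum row degree of a row-reduced generator matrix of `C1`), is an equivalence. -/
theorem isometry_memory_equiv {F : Type*} [Field F] [Fintype F] {n k : ℕ}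
    (C1 C2 : Submodule (Polynomial F) (Fin n → Polynomial F))
    (φ : C1 ≃ₗ[Polynomial F] C2) (hiso : IsIsometry C1 C2 φ)
    (G : Matrix (Fin k) (Fin n) (Polynomial F)) (hG : IsGenMat C1 G) (hRR : RowReduced G)
    (δ1 : ℕ) (hδ1 : δ1 = Finset.univ.sup fun i => degv (G i))
    (hφ : IsJEquiv C1 C2 φ δ1) :
    IsEquiv C1 C2 φ := by
  clear hRR
  have hGdeg : ∀ (i : Fin k) (ℓ : Fin n), (G i ℓ).natDegree ≤ δ1 := by
    intro i ℓ
    calc (G i ℓ).natDegree ≤ degv (G i) := by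
          unfold ConvCode.degv
          exact Finset.le_sup (f := fun ℓ => (G i ℓ).natDegree) (Finset.mem_univ ℓ)
      _ ≤ δ1 := by rw [hδ1]; exact Finset.le_sup (f := fun i => degv (G i)) (Finset.mem_univ i)
  intro j
  induction j using Nat.strong_induction_on with
  | _ j IH =>
  by_cases hj : j ≤ δ1
  · -- small j : apply the δ1-equivalence to `X^(δ1-j) • c`
    intro c
    set m := δ1 - j with hm
    have hsh := hφ ((X : Polynomial F) ^ m • c)
    have e1 : (((X : Polynomial F) ^ m • c : C1) : Fin n → Polynomial F)
        = (X : Polynomial F) ^ m • (c : Fin n → Polynomial F) := rfl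
    have e2 : ((φ ((X : Polynomial F) ^ m • c) : C2) : Fin n → Polynomial F)
        = (X : Polynomial F) ^ m • ((φ c : C2) : Fin n → Polynomial F) := by
      rw [map_smul]; rfl
    rw [e1, e2, show δ1 = j + m from by omega] at hsh
    rw [CCaux.wtv_shift, CCaux.wtv_shift] at hsh
    exact hsh
  · -- j = j' + 1 with δ1 ≤ j'
    obtain ⟨j', rfl⟩ : ∃ j'', j = j'' + 1 := ⟨j - 1, by omega⟩
    have hj' : δ1 ≤ j' := by omega
    set m := j' + 1 - δ1 with hm
    have hmδ : m + δ1 = j' + 1 := by omega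
    intro c
    have hc1 : (c : Fin n → Polynomial F) ∈
        Submodule.span (Polynomial F) (Set.range fun i => G i) := by
      rw [hG.2]; exact c.2
    obtain ⟨p, hp⟩ := (Submodule.mem_span_range_iff_exists_fun _).mp hc1
    set r : Fin k → Polynomial F := fun i => p i %ₘ X ^ m with hr
    set q : Fin k → Polynomial F := fun i => p i /ₘ X ^ m with hq
    set va : Fin n → Polynomial F := ∑ i, r i • G i with hva'
    set vb : Fin n → Polynomial F := ∑ i, q i • G i with hvb'
    have hva : va ∈ C1 := by
      rw [← hG.2]
      exact Submodule.sum_smul_mem _ _ fun i _ => Submodule.subset_span ⟨i, rfl⟩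
    have hvb : vb ∈ C1 := by
      rw [← hG.2]
      exact Submodule.sum_smul_mem _ _ fun i _ => Submodule.subset_span ⟨i, rfl⟩
    have hdecomp : (c : Fin n → Polynomial F) = va + (X : Polynomial F) ^ m • vb := by
      rw [hva', hvb', Finset.smul_sum, ← Finset.sum_add_distrib, ← hp]
      refine Finset.sum_congr rfl fun i _ => ?_
      rw [smul_smul, ← add_smul]
      congr 1
      exact (Polynomial.modByMonic_add_div (p i) (X ^ m)).symm
    have hda : ∀ ℓ i, j' < i → (va ℓ).coeff i = 0 := by
      intro ℓ i hi
      have hval : va ℓ = ∑ t, r t * G t ℓ := by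
        rw [hva', Finset.sum_apply]; rfl
      rw [hval, Polynomial.finset_sum_coeff]
      refine Finset.sum_eq_zero fun t _ => ?_
      by_cases hrz : r t = 0
      · simp [hrz]
      · apply Polynomial.coeff_eq_zero_of_natDegree_lt
        have h1 : (r t).natDegree < m := by
          rw [Polynomial.natDegree_lt_iff_degree_lt hrz]
          have := Polynomial.degree_modByMonic_lt (p t) (Polynomial.monic_X_pow (R := F) m)
          rwa [Polynomial.degree_X_pow] at this
        have h2 := hGdeg t ℓ
        have h3 : (r t * G t ℓ).natDegree ≤ (r t).natDegree + (G t ℓ).natDegree :=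
          Polynomial.natDegree_mul_le
        omega
    -- elements of C1
    set a : C1 := ⟨va, hva⟩ with ha'
    set b : C1 := ⟨vb, hvb⟩ with hb'
    have hav : ((a : C1) : Fin n → Polynomial F) = va := rfl
    have hbv : ((b : C1) : Fin n → Polynomial F) = vb := rfl
    have hcab : c = a + (X : Polynomial F) ^ m • b := by
      apply Subtype.ext
      rw [hdecomp]
      rfl
    have hφc : ((φ c : C2) : Fin n → Polynomial F)
        = ((φ a : C2) : Fin n → Polynomial F)
          + (X : Polynomial F) ^ m • ((φ b : C2) : Fin n → Polynomial F) := by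
      rw [hcab, map_add, map_smul]; rfl
    -- a has no tail beyond j'
    have htail_a : ∑ ℓ, ((va ℓ).support.filter (fun i => j' < i)).card = 0 := by
      refine Finset.sum_eq_zero fun ℓ _ => ?_
      rw [Finset.card_eq_zero, Finset.filter_eq_empty_iff]
      intro i hi hlt
      exact (Polynomial.mem_support_iff.mp hi) (hda ℓ i hlt)
    have htrunc_a : wtv (truncv 0 j' va) = wtv va := by
      have := CCaux.wtv_split va j'
      omega
    have hIa := IH j' (by omega) a
    rw [hav] at hIa
    have hisoa := hiso a
    rw [hav] at hisoa
    have hdφa : ∀ ℓ i, j' < i →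
        (((φ a : C2) : Fin n → Polynomial F) ℓ).coeff i = 0 := by
      apply CCaux.coeff_eq_zero_of_wtv_trunc _ j'
      omega
    -- tails of c and φ c
    have htail_c : ∀ ℓ, ((((c : Fin n → Polynomial F)) ℓ).support.filter
          (fun i => j' + 1 < i)).card
        = ((vb ℓ).support.filter (fun i => δ1 < i)).card := by
      intro ℓ
      have hcl : (c : Fin n → Polynomial F) ℓ = va ℓ + X ^ m * vb ℓ := by
        rw [hdecomp]; rfl
      rw [hcl, CCaux.tail_filter_eq (va ℓ) (vb ℓ) m δ1 j' hmδ (fun i hi => hda ℓ i hi),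
        Finset.card_map]
    have htail_φc : ∀ ℓ, (((((φ c : C2) : Fin n → Polynomial F)) ℓ).support.filter
          (fun i => j' + 1 < i)).card
        = ((((φ b : C2) : Fin n → Polynomial F) ℓ).support.filter
            (fun i => δ1 < i)).card := by
      intro ℓ
      have hcl : ((φ c : C2) : Fin n → Polynomial F) ℓ
          = ((φ a : C2) : Fin n → Polynomial F) ℓ
            + X ^ m * ((φ b : C2) : Fin n → Polynomial F) ℓ := by
        rw [hφc]; rfl
      rw [hcl, CCaux.tail_filter_eq _ _ m δ1 j' hmδ (fun i hi => hdφa ℓ i hi),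
        Finset.card_map]
    have hsum_c : ∑ ℓ, (((c : Fin n → Polynomial F) ℓ).support.filter
          (fun i => j' + 1 < i)).card
        = ∑ ℓ, ((vb ℓ).support.filter (fun i => δ1 < i)).card :=
      Finset.sum_congr rfl fun ℓ _ => htail_c ℓ
    have hsum_φc : ∑ ℓ, ((((φ c : C2) : Fin n → Polynomial F) ℓ).support.filter
          (fun i => j' + 1 < i)).card
        = ∑ ℓ, ((((φ b : C2) : Fin n → Polynomial F) ℓ).support.filter
            (fun i => δ1 < i)).card :=
      Finset.sum_congr rfl fun ℓ _ => htail_φc ℓ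
    have hsplit_c := CCaux.wtv_split (c : Fin n → Polynomial F) (j' + 1)
    have hsplit_φc := CCaux.wtv_split ((φ c : C2) : Fin n → Polynomial F) (j' + 1)
    have hsplit_b := CCaux.wtv_split vb δ1
    have hsplit_φb := CCaux.wtv_split ((φ b : C2) : Fin n → Polynomial F) δ1
    have hisoc := hiso c
    have hisob := hiso b
    rw [hbv] at hisob
    have hφb := hφ b
    rw [hbv] at hφb
    omega
end
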